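/- Let (b₀,b₁,…) be a sequence of integers such that p⁽ⁿ⁾ does not tend to ∞, and suppose q⁽ⁿ⁾ → ∞ as n → ∞. Then the continued fraction [b₀,b₁,…] converges and its value lies in ℚ∞ = ℚ ∪ {∞}. -/

import Mathlib

open Filter Topology OnePoint

/-- The Möbius map `z ↦ b - 1/z` on the one-point compactification `ℝ∞` of `ℝ`. -/
noncomputable def mob (b : ℤ) (z : OnePoint ℝ) : OnePoint ℝ :=
  Option.elim z ((b : ℝ) : OnePoint ℝ)
    (fun x => if x = 0 then (∞ : OnePoint ℝ) else (((b : ℝ) - 1 / x : ℝ) : OnePoint ℝ))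

/-- Value of a finite continued fraction `[b₀, …, b_m]`, i.e. `s₀(s₁(⋯ s_m(∞)))`. -/
noncomputable def cfVal : List ℤ → OnePoint ℝ
  | [] => ∞
  | b :: t => mob b (cfVal t)

/-- The `n`th convergent `v_n = S_n(∞)` of the continued fraction `[b₀, b₁, …]`. -/
noncomputable def cfConv (b : ℕ → ℤ) (n : ℕ) : OnePoint ℝ :=
  cfVal ((List.range (n + 1)).map b)

/-- `m` is a positive index at which the coefficient is `0`, `1` or `-1`. -/
def badIdx (b : ℕ → ℤ) (m : ℕ) : Prop :=
  1 ≤ m ∧ (b m = 0 ∨ b m = 1 ∨ b m = -1)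

instance (b : ℕ → ℤ) : DecidablePred (badIdx b) := fun m => by
  unfold badIdx; infer_instance

-- The singularization map `Φ` on integer sequences.
open Classical in
noncomputable def Phi (b : ℕ → ℤ) : ℕ → ℤ :=
  if h : ∃ m, badIdx b m then
    let m := Nat.find h
    if b m = 0 then
      fun k => if k + 1 < m then b k
        else if k = m - 1 then b (m - 1) + b (m + 1)
        else b (k + 2)
    else if b m = 1 then
      fun k => if k + 1 < m then b k
        else if k = m - 1 then b (m - 1) - 1
        else if k = m then b (m + 1) - 1
        else b (k + 1)
    else
      fun k => if k + 1 < m then b k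
        else if k = m - 1 then b (m - 1) + 1
        else if k = m then b (m + 1) + 1
        else b (k + 1)
  else b

-- `p(b) ∈ ℕ ∪ {∞}`: the least positive index at which `0`, `1` or `-1` occurs.
open Classical in
noncomputable def pIdx (b : ℕ → ℤ) : ℕ∞ :=
  if h : ∃ m, badIdx b m then (Nat.find h : ℕ∞) else ⊤

/-- `p⁽ⁿ⁾ → ∞` as `n → ∞`. -/
def PTendsToTop (b : ℕ → ℤ) : Prop :=
  ∀ N : ℕ, ∃ M : ℕ, ∀ n ≥ M, (N : ℕ∞) < pIdx (Phi^[n] b)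

/-- `p = liminf pⁿ`, as a natural number (junk value if the liminf is `∞`). -/
noncomputable def pLim (b : ℕ → ℤ) : ℕ :=
  (Filter.liminf (fun n => pIdx (Phi^[n] b)) Filter.atTop).toNat

/-- `q⁽ⁿ⁾ = |b⁽ⁿ⁾_{p-1}|`. -/
noncomputable def qSeq (b : ℕ → ℤ) (n : ℕ) : ℕ :=
  ((Phi^[n] b) (pLim b - 1)).natAbs

/-- Two continued fractions have the same tail. -/
def SameTail (b c : ℕ → ℤ) : Prop := ∃ r s : ℕ, ∀ k : ℕ, b (r + k) = c (s + k)

/-- `bstar` is the limit continued fraction: each coefficient of `Φⁿ(b)` stabilises on it. -/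
def EventuallyCoeff (b bstar : ℕ → ℤ) : Prop :=
  ∀ k : ℕ, ∃ N : ℕ, ∀ n ≥ N, Phi^[n] b k = bstar k

/-- The point of `ℝ∞` represented by the integer fraction `a/b` (`∞` when `b = 0`). -/
noncomputable def intPt (a b : ℤ) : OnePoint ℝ :=
  if b = 0 then ∞ else (((a : ℝ) / (b : ℝ)) : OnePoint ℝ)

/-- Adjacency in the Farey graph: `x = a/b`, `y = c/d` with `ad - bc = ±1`. -/
def FareyAdj (x y : OnePoint ℝ) : Prop :=
  ∃ a b c d : ℤ, x = intPt a b ∧ y = intPt c d ∧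
    (a * d - b * c = 1 ∨ a * d - b * c = -1)

/-- `x` is an extended rational, i.e. a member of `ℚ∞ = ℚ ∪ {∞} ⊆ ℝ∞`. -/
def IsExtRat (x : OnePoint ℝ) : Prop :=
  x = ∞ ∨ ∃ q : ℚ, x = ((q : ℝ) : OnePoint ℝ)

-- One step of the index-tracking sequence, for the current coefficient sequence `c`.
open Classical in
noncomputable def eStep (c : ℕ → ℤ) (e : ℕ) : Option ℕ :=
  if h : ∃ m, badIdx c m then
    let m := Nat.find h
    if c m = 0 then
      if e + 2 ≤ m then Option.some e
      else if e = m - 1 ∨ e = m then (none : Option ℕ)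
      else Option.some (e - 2)
    else
      if e + 2 ≤ m then Option.some e
      else if e = m - 1 then (none : Option ℕ)
      else Option.some (e - 1)
  else Option.some e

/-- The index-tracking sequence `e⁽⁰⁾(k), e⁽¹⁾(k), …` (`none` once it has terminated). -/
noncomputable def eSeq (b : ℕ → ℤ) (k : ℕ) : ℕ → Option ℕ
  | 0 => Option.some k
  | n + 1 => (eSeq b k n).bind (eStep (Phi^[n] b))

-- ======================= auxiliary machinery =======================
section Aux

open Bornology

@[simp] lemma mob_infty' (b : ℤ) : mob b ∞ = ((b : ℝ) : OnePoint ℝ) := rfl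

@[simp] lemma mob_coe' (b : ℤ) (x : ℝ) :
    mob b (x : OnePoint ℝ) = if x = 0 then ∞ else (((b : ℝ) - 1 / x : ℝ) : OnePoint ℝ) := rfl

lemma tendsto_sub_inv_cobounded (b : ℤ) :
    Filter.Tendsto (fun x : ℝ => (b : ℝ) - 1 / x) (cobounded ℝ) (nhds (b : ℝ)) := by
  have h2 : Filter.Tendsto (fun x : ℝ => 1 / x) (cobounded ℝ) (nhds 0) := by
    simpa [one_div] using tendsto_inv₀_cobounded (α := ℝ)
  simpa using tendsto_const_nhds.sub h2

lemma tendsto_sub_inv_cobounded' (b : ℤ) :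
    Filter.Tendsto (fun x : ℝ => (b : ℝ) - 1 / x) (nhdsWithin (0:ℝ) {(0:ℝ)}ᶜ) (cobounded ℝ) := by
  have h2 : Filter.Tendsto (fun x : ℝ => 1 / x) (nhdsWithin (0:ℝ) {(0:ℝ)}ᶜ) (cobounded ℝ) := by
    simpa [one_div] using tendsto_inv₀_nhdsNE_zero (α := ℝ)
  rw [← tendsto_norm_atTop_iff_cobounded] at h2 ⊢
  apply tendsto_atTop_mono' _ _ (tendsto_atTop_add_const_right _ (-‖(b:ℝ)‖) h2)
  filter_upwards with x
  simp only [Real.norm_eq_abs]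
  rw [abs_sub_comm]
  linarith [abs_sub_abs_le_abs_sub (1/x) ((b:ℝ))]

lemma continuous_mob_coe (b : ℤ) : Continuous (fun x : ℝ => mob b (x : OnePoint ℝ)) := by
  rw [continuous_iff_continuousAt]
  intro x₀
  rcases eq_or_ne x₀ 0 with rfl | hx
  · unfold ContinuousAt
    have h0 : (fun x : ℝ => mob b (x : OnePoint ℝ)) 0 = ∞ := by simp [mob_coe']
    rw [h0]
    rw [← nhdsNE_sup_pure, Filter.tendsto_sup]
    constructor
    · have h := tendsto_sub_inv_cobounded' b
      have h2 : Filter.Tendsto (fun x : ℝ => (((b:ℝ) - 1/x :ℝ) : OnePoint ℝ))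
          (nhdsWithin (0:ℝ) {(0:ℝ)}ᶜ) (nhds ∞) := by
        refine (OnePoint.tendsto_coe_infty).comp ?_
        rw [Filter.coclosedCompact_eq_cocompact, ← Metric.cobounded_eq_cocompact]
        exact h
      refine h2.congr' ?_
      filter_upwards [self_mem_nhdsWithin] with x hx
      rw [mob_coe', if_neg (by simpa using hx)]
    · simpa [mob_coe'] using tendsto_pure_nhds (fun x : ℝ => mob b (x : OnePoint ℝ)) 0
  · have hg : ContinuousAt (fun x : ℝ => (((b:ℝ) - 1/x : ℝ) : OnePoint ℝ)) x₀ :=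
      (OnePoint.continuous_coe.continuousAt).comp
        (continuousAt_const.sub (continuousAt_const.div continuousAt_id hx))
    refine hg.congr ?_
    filter_upwards [isOpen_ne.mem_nhds hx] with x hx'
    simp [mob_coe', hx']

lemma continuous_mob (b : ℤ) : Continuous (mob b) := by
  rw [OnePoint.continuous_iff]
  refine ⟨?_, continuous_mob_coe b⟩
  rw [Filter.coclosedCompact_eq_cocompact, ← Metric.cobounded_eq_cocompact]
  have h1 := tendsto_sub_inv_cobounded b
  have h2 : Filter.Tendsto (fun x : ℝ => (((b:ℝ) - 1/x : ℝ) : OnePoint ℝ)) (cobounded ℝ)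
      (nhds ((b:ℝ) : OnePoint ℝ)) := by
    rw [OnePoint.nhds_coe_eq]
    exact (Filter.tendsto_map.comp h1 : _)
  refine h2.congr' ?_
  filter_upwards [eventually_cobounded_le_norm 1] with x hx
  have hx0 : x ≠ 0 := by
    intro h; rw [h] at hx; simp at hx; linarith
  rw [mob_coe', if_neg hx0]

/-- translation on `ℝ∞` -/
noncomputable def trP (c : ℝ) (z : OnePoint ℝ) : OnePoint ℝ :=
  Option.elim z ∞ (fun x => ((x + c : ℝ) : OnePoint ℝ))

@[simp] lemma trP_infty (c : ℝ) : trP c ∞ = ∞ := rfl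
@[simp] lemma trP_coe (c x : ℝ) : trP c (x : OnePoint ℝ) = ((x + c : ℝ) : OnePoint ℝ) := rfl

lemma mob_zero_eq_trP (x : ℤ) (w : OnePoint ℝ) : mob x (mob 0 w) = trP x w := by
  cases w with
  | infty => simp
  | coe u =>
    rcases eq_or_ne u 0 with rfl | hu
    · simp
    · have h1 : (0:ℝ) - 1/u ≠ 0 := by simpa [one_div] using inv_ne_zero hu
      simp only [mob_coe', Int.cast_zero, if_neg hu, if_neg h1, trP_coe]
      congr 1
      field_simp
      ring

lemma trP_mob (c : ℤ) (y : ℤ) (t : OnePoint ℝ) : trP c (mob y t) = mob (c + y) t := by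
  cases t with
  | infty => simp; push_cast; ring
  | coe u =>
    rcases eq_or_ne u 0 with rfl | hu
    · simp
    · simp only [mob_coe', if_neg hu, trP_coe]
      congr 1
      push_cast
      ring

lemma mob0_comp (x y : ℤ) (t : OnePoint ℝ) :
    mob x (mob 0 (mob y t)) = mob (x + y) t := by
  rw [mob_zero_eq_trP, trP_mob]

lemma mob_one_eq (x : ℤ) (w : OnePoint ℝ) : mob x (mob 1 w) = mob (x - 1) (trP (-1) w) := by
  cases w with
  | infty => simp
  | coe u =>
    rcases eq_or_ne u 0 with rfl | hu
    · norm_num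
    · rcases eq_or_ne u 1 with rfl | hu1
      · norm_num
      · have h1 : (1:ℝ) - 1/u ≠ 0 := by
          intro h
          apply hu1
          field_simp at h
          linarith
        have h2 : u + (-1:ℝ) ≠ 0 := by intro h; apply hu1; linarith
        have h3 : (-1:ℝ) + u ≠ 0 := fun h => hu1 (by linarith)
        simp only [mob_coe', trP_coe, Int.cast_one, Int.cast_sub, Int.cast_neg, Int.cast_add,
          if_neg hu]
        rw [if_neg h1, if_neg h2]
        congr 1
        field_simp [h3]
        ring

lemma trP_mob' (y : ℤ) (t : OnePoint ℝ) : trP (-1) (mob y t) = mob (y - 1) t := by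
  have h := trP_mob (-1) y t
  rw [show ((-1:ℤ):ℝ) = (-1:ℝ) by norm_num, show (-1 + y) = y - 1 by ring] at h
  exact h

lemma mob1_comp (x y : ℤ) (t : OnePoint ℝ) :
    mob x (mob 1 (mob y t)) = mob (x - 1) (mob (y - 1) t) := by
  rw [mob_one_eq, trP_mob']

lemma mob_negone_eq (x : ℤ) (w : OnePoint ℝ) :
    mob x (mob (-1) w) = mob (x + 1) (trP 1 w) := by
  cases w with
  | infty => simp
  | coe u =>
    rcases eq_or_ne u 0 with rfl | hu
    · norm_num
    · rcases eq_or_ne u (-1) with rfl | hu1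
      · norm_num
      · have h1 : (-1:ℝ) - 1/u ≠ 0 := by
          intro h
          apply hu1
          field_simp at h
          linarith
        have h2 : u + (1:ℝ) ≠ 0 := by intro h; apply hu1; linarith
        have h3 : (-1:ℝ) - u ≠ 0 := fun h => hu1 (by linarith)
        simp only [mob_coe', trP_coe, Int.cast_one, Int.cast_sub, Int.cast_neg, Int.cast_add,
          if_neg hu]
        rw [if_neg h1, if_neg h2]
        congr 1
        field_simp [h3]
        linear_combination u * mul_inv_cancel₀ h3

lemma trP_mob'' (y : ℤ) (t : OnePoint ℝ) : trP 1 (mob y t) = mob (y + 1) t := by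
  have h := trP_mob 1 y t
  rw [show ((1:ℤ):ℝ) = (1:ℝ) by norm_num, show (1 + y) = y + 1 by ring] at h
  exact h

lemma mobm1_comp (x y : ℤ) (t : OnePoint ℝ) :
    mob x (mob (-1) (mob y t)) = mob (x + 1) (mob (y + 1) t) := by
  rw [mob_negone_eq, trP_mob'']

-- list layer

noncomputable def mobL : List ℤ → OnePoint ℝ → OnePoint ℝ
  | [], z => z
  | b :: t, z => mob b (mobL t z)

@[simp] lemma mobL_nil (z : OnePoint ℝ) : mobL [] z = z := rfl
@[simp] lemma mobL_cons (a : ℤ) (t : List ℤ) (z : OnePoint ℝ) :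
    mobL (a :: t) z = mob a (mobL t z) := rfl

@[simp] lemma cfVal_nil : cfVal [] = ∞ := rfl
@[simp] lemma cfVal_cons (a : ℤ) (t : List ℤ) : cfVal (a :: t) = mob a (cfVal t) := rfl

lemma cfVal_eq_mobL (l : List ℤ) : cfVal l = mobL l ∞ := by
  induction l with
  | nil => rfl
  | cons a t ih => simp [ih]

lemma mobL_append (l₁ l₂ : List ℤ) (z : OnePoint ℝ) :
    mobL (l₁ ++ l₂) z = mobL l₁ (mobL l₂ z) := by
  induction l₁ with
  | nil => rfl
  | cons a t ih => simp [ih]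

lemma cfVal_append (l₁ l₂ : List ℤ) : cfVal (l₁ ++ l₂) = mobL l₁ (cfVal l₂) := by
  rw [cfVal_eq_mobL, cfVal_eq_mobL l₂, mobL_append]

lemma continuous_mobL (l : List ℤ) : Continuous (mobL l) := by
  induction l with
  | nil => exact continuous_id
  | cons a t ih => exact (continuous_mob a).comp ih

lemma key0 (P B : List ℤ) (x y : ℤ) :
    cfVal (P ++ x :: 0 :: y :: B) = cfVal (P ++ (x + y) :: B) := by
  induction P with
  | nil => simp [mob0_comp]
  | cons a t ih => simp [ih]

lemma key1 (P B : List ℤ) (x y : ℤ) :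
    cfVal (P ++ x :: 1 :: y :: B) = cfVal (P ++ (x - 1) :: (y - 1) :: B) := by
  induction P with
  | nil => simp [mob1_comp]
  | cons a t ih => simp [ih]

lemma keym1 (P B : List ℤ) (x y : ℤ) :
    cfVal (P ++ x :: (-1) :: y :: B) = cfVal (P ++ (x + 1) :: (y + 1) :: B) := by
  induction P with
  | nil => simp [mobm1_comp]
  | cons a t ih => simp [ih]

lemma keyend0 (P : List ℤ) (x : ℤ) : cfVal (P ++ [x, 0]) = cfVal P := by
  induction P with
  | nil => norm_num
  | cons a t ih => simp [ih]

lemma keyend1 (P : List ℤ) (x : ℤ) : cfVal (P ++ [x, 1]) = cfVal (P ++ [x - 1]) := by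
  induction P with
  | nil => norm_num
  | cons a t ih => simp [ih]

lemma keyendm1 (P : List ℤ) (x : ℤ) : cfVal (P ++ [x, -1]) = cfVal (P ++ [x + 1]) := by
  induction P with
  | nil => norm_num
  | cons a t ih => simp [ih]

lemma range_split (c : ℕ → ℤ) (a ℓ : ℕ) (h : a ≤ ℓ) :
    (List.range ℓ).map c = (List.range a).map c
      ++ (List.range (ℓ - a)).map (fun i => c (a + i)) := by
  conv_lhs => rw [show ℓ = a + (ℓ - a) by omega]
  rw [List.range_add, List.map_append, List.map_map]
  rfl

-- Phi coefficient lemmas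

lemma Phi_lt (c : ℕ → ℤ) (h : ∃ m, badIdx c m) (k : ℕ) (hk : k + 1 < Nat.find h) :
    Phi c k = c k := by
  simp only [Phi, dif_pos h]
  split_ifs <;> simp only [if_pos hk]

lemma Phi0 (c : ℕ → ℤ) (h : ∃ m, badIdx c m) (hc : c (Nat.find h) = 0) (k : ℕ)
    (hk : Nat.find h ≤ k + 1) :
    Phi c k = if k = Nat.find h - 1 then c (Nat.find h - 1) + c (Nat.find h + 1)
      else c (k + 2) := by
  simp only [Phi, dif_pos h, if_pos hc]
  rw [if_neg (by omega)]

lemma Phi1 (c : ℕ → ℤ) (h : ∃ m, badIdx c m) (hc : c (Nat.find h) = 1) (k : ℕ)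
    (hk : Nat.find h ≤ k + 1) :
    Phi c k = if k = Nat.find h - 1 then c (Nat.find h - 1) - 1
      else if k = Nat.find h then c (Nat.find h + 1) - 1 else c (k + 1) := by
  have h0 : ¬ c (Nat.find h) = 0 := by omega
  simp only [Phi, dif_pos h, if_neg h0, if_pos hc]
  rw [if_neg (by omega)]

lemma Phim1 (c : ℕ → ℤ) (h : ∃ m, badIdx c m) (hc : c (Nat.find h) = -1) (k : ℕ)
    (hk : Nat.find h ≤ k + 1) :
    Phi c k = if k = Nat.find h - 1 then c (Nat.find h - 1) + 1
      else if k = Nat.find h then c (Nat.find h + 1) + 1 else c (k + 1) := by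
  have h0 : ¬ c (Nat.find h) = 0 := by omega
  have h1 : ¬ c (Nat.find h) = 1 := by omega
  simp only [Phi, dif_pos h, if_neg h0, if_neg h1]
  rw [if_neg (by omega)]

lemma Phi_no_bad (c : ℕ → ℤ) (h : ¬ ∃ m, badIdx c m) : Phi c = c := by
  simp only [Phi, dif_neg h]

-- convergents by length

noncomputable def V (c : ℕ → ℤ) (ℓ : ℕ) : OnePoint ℝ := cfVal ((List.range ℓ).map c)

lemma range_map_cons (f : ℕ → ℤ) (n : ℕ) :
    (List.range (n + 1)).map f = f 0 :: (List.range n).map (fun i => f (1 + i)) := by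
  rw [show n + 1 = 1 + n by omega, List.range_add]
  simp [List.range_succ, List.map_map]

lemma map_range_congr (f g : ℕ → ℤ) (n : ℕ) (h : ∀ i < n, f i = g i) :
    (List.range n).map f = (List.range n).map g :=
  List.map_congr_left (fun a ha => h a (List.mem_range.mp ha))

lemma map_range_eq_cons (f : ℕ → ℤ) (n : ℕ) (a : ℤ) (g : ℕ → ℤ)
    (h0 : f 0 = a) (hs : ∀ i, i < n → f (1 + i) = g i) :
    (List.range (n + 1)).map f = a :: (List.range n).map g := by
  rw [range_map_cons, h0]
  congr 1
  exact map_range_congr _ _ _ hs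

lemma V_congr (c d : ℕ → ℤ) (ℓ : ℕ) (h : ∀ k < ℓ, c k = d k) : V c ℓ = V d ℓ := by
  unfold V; rw [map_range_congr c d ℓ h]

section Red
variable (c : ℕ → ℤ) (h : ∃ m, badIdx c m)

lemma prefix_eq : ∀ a, a ≤ Nat.find h - 1 →
    (List.range a).map (Phi c) = (List.range a).map c := by
  intro a ha
  apply map_range_congr
  intro i hi
  have hm1 : 1 ≤ Nat.find h := (Nat.find_spec h).1
  exact Phi_lt c h i (by omega)

lemma V_red0 (hc : c (Nat.find h) = 0) (ℓ : ℕ) (hl : Nat.find h + 1 ≤ ℓ) :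
    V c ℓ = V (Phi c) (ℓ - 2) := by
  have hm1 : 1 ≤ Nat.find h := (Nat.find_spec h).1
  set m := Nat.find h with hm
  unfold V
  rw [range_split c (m-1) ℓ (by omega), range_split (Phi c) (m-1) (ℓ-2) (by omega),
    prefix_eq c h (m-1) le_rfl]
  rcases Nat.lt_or_ge ℓ (m + 2) with hc2 | hc2
  · have e1 : (List.range (ℓ - (m-1))).map (fun i => c (m - 1 + i)) = [c (m-1), (0:ℤ)] := by
      rw [show ℓ - (m - 1) = 1 + 1 by omega]
      rw [map_range_eq_cons _ _ (c (m-1)) (fun i => c (m + i)) rfl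
        (fun i _ => by congr 1 <;> omega)]
      rw [map_range_eq_cons _ _ (0:ℤ) (fun i => (0:ℤ))
        (by rw [show m + 0 = m from rfl, hc]) (fun i hi => absurd hi (by omega))]
      rfl
    have e2 : (List.range (ℓ - 2 - (m-1))).map (fun i => Phi c (m - 1 + i)) = [] := by
      rw [show ℓ - 2 - (m - 1) = 0 by omega]; rfl
    rw [e1, e2, List.append_nil]
    exact keyend0 _ _
  · set s := ℓ - m - 2 with hs
    set B : List ℤ := (List.range s).map (fun i => c (m + 2 + i)) with hB
    have e1 : (List.range (ℓ - (m-1))).map (fun i => c (m - 1 + i))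
        = c (m-1) :: (0:ℤ) :: c (m+1) :: B := by
      rw [show ℓ - (m - 1) = (s + 1 + 1) + 1 by omega]
      rw [map_range_eq_cons _ _ (c (m-1)) (fun i => c (m + i)) rfl
        (fun i _ => by congr 1 <;> omega)]
      rw [map_range_eq_cons _ _ (0:ℤ) (fun i => c (m + 1 + i))
        (by rw [show m + 0 = m from rfl, hc]) (fun i _ => by congr 1 <;> omega)]
      rw [map_range_eq_cons _ _ (c (m+1)) (fun i => c (m + 2 + i)) (by congr 1 <;> omega)
        (fun i _ => by congr 1 <;> omega)]
    have e2 : (List.range (ℓ - 2 - (m-1))).map (fun i => Phi c (m - 1 + i))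
        = (c (m-1) + c (m+1)) :: B := by
      rw [show ℓ - 2 - (m - 1) = s + 1 by omega]
      rw [map_range_eq_cons _ _ (c (m-1) + c (m+1)) (fun i => c (m + 2 + i))
        (by rw [show m - 1 + 0 = m - 1 by omega, Phi0 c h hc (m-1) (by omega), if_pos rfl])
        (fun i _ => by
          rw [show m - 1 + (1 + i) = m + i by omega, Phi0 c h hc (m+i) (by omega),
            if_neg (by omega), show m + i + 2 = m + 2 + i by omega])]
    rw [e1, e2]
    exact key0 _ _ _ _

lemma V_red1 (hc : c (Nat.find h) = 1) (ℓ : ℕ) (hl : Nat.find h + 1 ≤ ℓ) :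
    V c ℓ = V (Phi c) (ℓ - 1) := by
  have hm1 : 1 ≤ Nat.find h := (Nat.find_spec h).1
  set m := Nat.find h with hm
  unfold V
  rw [range_split c (m-1) ℓ (by omega), range_split (Phi c) (m-1) (ℓ-1) (by omega),
    prefix_eq c h (m-1) le_rfl]
  rcases Nat.lt_or_ge ℓ (m + 2) with hc2 | hc2
  · have e1 : (List.range (ℓ - (m-1))).map (fun i => c (m - 1 + i)) = [c (m-1), (1:ℤ)] := by
      rw [show ℓ - (m - 1) = 1 + 1 by omega]
      rw [map_range_eq_cons _ _ (c (m-1)) (fun i => c (m + i)) rfl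
        (fun i _ => by congr 1 <;> omega)]
      rw [map_range_eq_cons _ _ (1:ℤ) (fun i => (1:ℤ))
        (by rw [show m + 0 = m from rfl, hc]) (fun i hi => absurd hi (by omega))]
      rfl
    have e2 : (List.range (ℓ - 1 - (m-1))).map (fun i => Phi c (m - 1 + i))
        = [c (m-1) - 1] := by
      rw [show ℓ - 1 - (m - 1) = 0 + 1 by omega]
      rw [map_range_eq_cons _ _ (c (m-1) - 1) (fun i => (0:ℤ))
        (by rw [show m - 1 + 0 = m - 1 by omega, Phi1 c h hc (m-1) (by omega), if_pos rfl])
        (fun i hi => absurd hi (by omega))]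
      rfl
    rw [e1, e2]
    exact keyend1 _ _
  · set s := ℓ - m - 2 with hs
    set B : List ℤ := (List.range s).map (fun i => c (m + 2 + i)) with hB
    have e1 : (List.range (ℓ - (m-1))).map (fun i => c (m - 1 + i))
        = c (m-1) :: (1:ℤ) :: c (m+1) :: B := by
      rw [show ℓ - (m - 1) = (s + 1 + 1) + 1 by omega]
      rw [map_range_eq_cons _ _ (c (m-1)) (fun i => c (m + i)) rfl
        (fun i _ => by congr 1 <;> omega)]
      rw [map_range_eq_cons _ _ (1:ℤ) (fun i => c (m + 1 + i))
        (by rw [show m + 0 = m from rfl, hc]) (fun i _ => by congr 1 <;> omega)]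
      rw [map_range_eq_cons _ _ (c (m+1)) (fun i => c (m + 2 + i)) (by congr 1 <;> omega)
        (fun i _ => by congr 1 <;> omega)]
    have e2 : (List.range (ℓ - 1 - (m-1))).map (fun i => Phi c (m - 1 + i))
        = (c (m-1) - 1) :: (c (m+1) - 1) :: B := by
      rw [show ℓ - 1 - (m - 1) = (s + 1) + 1 by omega]
      rw [map_range_eq_cons _ _ (c (m-1) - 1) (fun i => Phi c (m + i))
        (by rw [show m - 1 + 0 = m - 1 by omega, Phi1 c h hc (m-1) (by omega), if_pos rfl])
        (fun i _ => by congr 1 <;> omega)]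
      rw [map_range_eq_cons _ _ (c (m+1) - 1) (fun i => c (m + 2 + i))
        (by rw [show m + 0 = m from rfl, Phi1 c h hc m (by omega), if_neg (by omega),
          if_pos rfl])
        (fun i _ => by
          rw [show m + (1 + i) = m + 1 + i by omega, Phi1 c h hc (m+1+i) (by omega),
            if_neg (by omega), if_neg (by omega), show m + 1 + i + 1 = m + 2 + i by omega])]
    rw [e1, e2]
    exact key1 _ _ _ _

lemma V_redm1 (hc : c (Nat.find h) = -1) (ℓ : ℕ) (hl : Nat.find h + 1 ≤ ℓ) :
    V c ℓ = V (Phi c) (ℓ - 1) := by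
  have hm1 : 1 ≤ Nat.find h := (Nat.find_spec h).1
  set m := Nat.find h with hm
  unfold V
  rw [range_split c (m-1) ℓ (by omega), range_split (Phi c) (m-1) (ℓ-1) (by omega),
    prefix_eq c h (m-1) le_rfl]
  rcases Nat.lt_or_ge ℓ (m + 2) with hc2 | hc2
  · have e1 : (List.range (ℓ - (m-1))).map (fun i => c (m - 1 + i)) = [c (m-1), (-1:ℤ)] := by
      rw [show ℓ - (m - 1) = 1 + 1 by omega]
      rw [map_range_eq_cons _ _ (c (m-1)) (fun i => c (m + i)) rfl
        (fun i _ => by congr 1 <;> omega)]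
      rw [map_range_eq_cons _ _ (-1:ℤ) (fun i => (-1:ℤ))
        (by rw [show m + 0 = m from rfl, hc]) (fun i hi => absurd hi (by omega))]
      rfl
    have e2 : (List.range (ℓ - 1 - (m-1))).map (fun i => Phi c (m - 1 + i))
        = [c (m-1) + 1] := by
      rw [show ℓ - 1 - (m - 1) = 0 + 1 by omega]
      rw [map_range_eq_cons _ _ (c (m-1) + 1) (fun i => (0:ℤ))
        (by rw [show m - 1 + 0 = m - 1 by omega, Phim1 c h hc (m-1) (by omega), if_pos rfl])
        (fun i hi => absurd hi (by omega))]
      rfl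
    rw [e1, e2]
    exact keyendm1 _ _
  · set s := ℓ - m - 2 with hs
    set B : List ℤ := (List.range s).map (fun i => c (m + 2 + i)) with hB
    have e1 : (List.range (ℓ - (m-1))).map (fun i => c (m - 1 + i))
        = c (m-1) :: (-1:ℤ) :: c (m+1) :: B := by
      rw [show ℓ - (m - 1) = (s + 1 + 1) + 1 by omega]
      rw [map_range_eq_cons _ _ (c (m-1)) (fun i => c (m + i)) rfl
        (fun i _ => by congr 1 <;> omega)]
      rw [map_range_eq_cons _ _ (-1:ℤ) (fun i => c (m + 1 + i))
        (by rw [show m + 0 = m from rfl, hc]) (fun i _ => by congr 1 <;> omega)]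
      rw [map_range_eq_cons _ _ (c (m+1)) (fun i => c (m + 2 + i)) (by congr 1 <;> omega)
        (fun i _ => by congr 1 <;> omega)]
    have e2 : (List.range (ℓ - 1 - (m-1))).map (fun i => Phi c (m - 1 + i))
        = (c (m-1) + 1) :: (c (m+1) + 1) :: B := by
      rw [show ℓ - 1 - (m - 1) = (s + 1) + 1 by omega]
      rw [map_range_eq_cons _ _ (c (m-1) + 1) (fun i => Phi c (m + i))
        (by rw [show m - 1 + 0 = m - 1 by omega, Phim1 c h hc (m-1) (by omega), if_pos rfl])
        (fun i _ => by congr 1 <;> omega)]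
      rw [map_range_eq_cons _ _ (c (m+1) + 1) (fun i => c (m + 2 + i))
        (by rw [show m + 0 = m from rfl, Phim1 c h hc m (by omega), if_neg (by omega),
          if_pos rfl])
        (fun i _ => by
          rw [show m + (1 + i) = m + 1 + i by omega, Phim1 c h hc (m+1+i) (by omega),
            if_neg (by omega), if_neg (by omega), show m + 1 + i + 1 = m + 2 + i by omega])]
    rw [e1, e2]
    exact keym1 _ _ _ _

lemma V_red (ℓ : ℕ) (hl : Nat.find h + 1 ≤ ℓ) :
    V c ℓ = V (Phi c) (ℓ - if c (Nat.find h) = 0 then 2 else 1) := by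
  rcases (Nat.find_spec h).2 with hc | hc | hc
  · rw [if_pos hc]; exact V_red0 c h hc ℓ hl
  · rw [if_neg (by omega)]; exact V_red1 c h hc ℓ hl
  · rw [if_neg (by omega)]; exact V_redm1 c h hc ℓ hl

end Red

-- tail size estimates

lemma two_le_abs_real {z : ℤ} (h0 : z ≠ 0) (h1 : z ≠ 1) (h2 : z ≠ -1) : (2:ℝ) ≤ |(z:ℝ)| := by
  have h : (2:ℤ) ≤ |z| := by
    rcases le_or_gt 0 z with hz | hz
    · rw [abs_of_nonneg hz]; omega
    · rw [abs_of_neg hz]; omega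
  calc (2:ℝ) = ((2:ℤ):ℝ) := by norm_num
  _ ≤ ((|z|:ℤ):ℝ) := by exact_mod_cast h
  _ = |(z:ℝ)| := by push_cast; ring

lemma cfVal_big : ∀ (l : List ℤ), (∀ z ∈ l, (2:ℝ) ≤ |(z:ℝ)|) →
    l = [] ∨ ∃ x : ℝ, cfVal l = (x : OnePoint ℝ) ∧ 1 < |x|
  | [], _ => Or.inl rfl
  | a :: t, h => Or.inr (by
      have ha := h a (by simp)
      rcases cfVal_big t (fun z hz => h z (by simp [hz])) with rfl | ⟨x, hx, hx1⟩
      · exact ⟨(a:ℝ), by simp, by linarith⟩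
      · have hx0 : x ≠ 0 := by intro h0; rw [h0] at hx1; norm_num at hx1
        refine ⟨(a:ℝ) - 1/x, ?_, ?_⟩
        · rw [cfVal_cons, hx, mob_coe', if_neg hx0]
        · have hxpos : (1:ℝ) < |x| := hx1
          have hinv : |1/x| < 1 := by
            rw [abs_div, abs_one, div_lt_one (by linarith)]
            linarith
          have h3 := abs_sub_abs_le_abs_sub ((a:ℝ)) (1/x)
          linarith)

lemma cfVal_head (a : ℤ) (l : List ℤ) (h : ∀ z ∈ l, (2:ℝ) ≤ |(z:ℝ)|) :
    ∃ x : ℝ, cfVal (a :: l) = (x : OnePoint ℝ) ∧ |(a:ℝ)| - 1 ≤ |x| := by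
  rcases cfVal_big l h with rfl | ⟨x, hx, hx1⟩
  · exact ⟨(a:ℝ), by simp, by linarith [abs_nonneg ((a:ℝ))]⟩
  · have hx0 : x ≠ 0 := by intro h0; rw [h0] at hx1; norm_num at hx1
    refine ⟨(a:ℝ) - 1/x, ?_, ?_⟩
    · rw [cfVal_cons, hx, mob_coe', if_neg hx0]
    · have hinv : |1/x| < 1 := by
        rw [abs_div, abs_one, div_lt_one (by linarith)]
        linarith
      have h3 := abs_sub_abs_le_abs_sub ((a:ℝ)) (1/x)
      linarith

-- neighbourhoods of ∞

lemma nhds_infty_ball (U : Set (OnePoint ℝ)) (hU : IsOpen U) (hinf : (∞ : OnePoint ℝ) ∈ U) :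
    ∃ R : ℝ, ∀ x : ℝ, R ≤ |x| → ((x : ℝ) : OnePoint ℝ) ∈ U := by
  obtain ⟨-, hcpt⟩ := (OnePoint.isOpen_iff_of_mem hinf).mp hU
  obtain ⟨r, hr⟩ := (Metric.isBounded_iff_subset_closedBall 0).mp hcpt.isBounded
  refine ⟨|r| + 1, fun x hx => ?_⟩
  by_contra hmem
  have hxK : x ∈ (((↑) : ℝ → OnePoint ℝ) ⁻¹' U)ᶜ := hmem
  have := hr hxK
  rw [Metric.mem_closedBall, Real.dist_0_eq_abs] at this
  have : |r| + 1 ≤ r := le_trans hx this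
  have := le_abs_self r
  linarith

-- extended rationals

lemma isExtRat_cfVal (l : List ℤ) : IsExtRat (cfVal l) := by
  induction l with
  | nil => exact Or.inl rfl
  | cons a t ih =>
    rcases ih with hinf | ⟨q, hq⟩
    · right
      refine ⟨(a:ℚ), ?_⟩
      rw [cfVal_cons, hinf, mob_infty']
      norm_num
    · rw [cfVal_cons, hq]
      by_cases h0 : ((q:ℝ)) = 0
      · left; rw [mob_coe', if_pos h0]
      · right
        refine ⟨(a:ℚ) - 1/q, ?_⟩
        rw [mob_coe', if_neg h0]
        congr 1
        push_cast
        ring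

end Aux

/-- **Theorem 1(ii)(a).** If `p⁽ⁿ⁾ ↛ ∞` and `q⁽ⁿ⁾ → ∞`, then `[b₀, b₁, …]` converges
to an extended rational. -/
theorem stmt2 (b : ℕ → ℤ) (hp : ¬ PTendsToTop b)
    (hq : Filter.Tendsto (qSeq b) Filter.atTop Filter.atTop) :
    ∃ L : OnePoint ℝ, IsExtRat L ∧ Filter.Tendsto (cfConv b) Filter.atTop (nhds L) := by
  classical
  set cs : ℕ → ℕ → ℤ := fun n => Phi^[n] b with hcs
  -- every iterate has a bad index
  have hex : ∀ n, ∃ m, badIdx (cs n) m := by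
    by_contra hno
    push_neg at hno
    obtain ⟨n0, hn0⟩ := hno
    apply hp
    intro N
    refine ⟨n0, fun n hn => ?_⟩
    have hfix : ∀ k, Phi^[n0 + k] b = Phi^[n0] b := by
      intro k
      induction k with
      | zero => rfl
      | succ k ih =>
        rw [show n0 + (k+1) = (n0 + k) + 1 by omega, Function.iterate_succ_apply', ih]
        exact Phi_no_bad _ (by simpa [hcs] using hn0)
    have heq : Phi^[n] b = Phi^[n0] b := by
      rw [show n = n0 + (n - n0) by omega, hfix]
    rw [heq]
    unfold pIdx
    rw [dif_neg (by simpa [hcs] using hn0)]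
    exact WithTop.coe_lt_top N
  set mI : ℕ → ℕ := fun n => Nat.find (hex n) with hmI
  have hpIdx : ∀ n, pIdx (Phi^[n] b) = (mI n : ℕ∞) := by
    intro n
    unfold pIdx
    rw [dif_pos (hex n)]
  set p : ℕ := pLim b with hpdef
  have hub : Filter.liminf (fun n => pIdx (Phi^[n] b)) Filter.atTop ≠ ⊤ := by
    unfold PTendsToTop at hp
    push_neg at hp
    obtain ⟨N₀, hN₀⟩ := hp
    have hfr : ∃ᶠ n in Filter.atTop, pIdx (Phi^[n] b) ≤ (N₀ : ℕ∞) := by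
      rw [Filter.frequently_atTop]
      intro a
      obtain ⟨n, hn, hn2⟩ := hN₀ a
      exact ⟨n, hn, hn2⟩
    have hle := Filter.liminf_le_of_frequently_le hfr
    intro htop
    rw [htop] at hle
    exact (lt_irrefl _ (lt_of_le_of_lt hle (WithTop.coe_lt_top N₀)))
  have hco : ((p : ℕ∞)) = Filter.liminf (fun n => pIdx (Phi^[n] b)) Filter.atTop := by
    rw [hpdef]
    unfold pLim
    exact ENat.coe_toNat hub
  have hp1 : 1 ≤ p := by
    have h1 : (1 : ℕ∞) ≤ Filter.liminf (fun n => pIdx (Phi^[n] b)) Filter.atTop := by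
      refine Filter.le_liminf_of_le (by isBoundedDefault)
        (Filter.Eventually.of_forall (fun n => ?_))
      rw [hpIdx n]
      exact_mod_cast (Nat.find_spec (hex n)).1
    rw [← hco] at h1
    exact_mod_cast h1
  have hev : ∀ᶠ n in Filter.atTop, p ≤ mI n := by
    have hlt : ((p - 1 : ℕ) : ℕ∞) < Filter.liminf (fun n => pIdx (Phi^[n] b)) Filter.atTop := by
      rw [← hco]
      exact_mod_cast (by omega : p - 1 < p)
    filter_upwards [Filter.eventually_lt_of_lt_liminf hlt] with n hn
    rw [hpIdx n] at hn
    have : (p - 1 : ℕ) < mI n := by exact_mod_cast hn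
    omega
  obtain ⟨N₁, hN₁⟩ := Filter.eventually_atTop.mp hev
  -- stable prefix
  have hstab : ∀ n, N₁ ≤ n → ∀ k, k + 1 < p → cs n k = cs N₁ k := by
    intro n hn
    induction n, hn using Nat.le_induction with
    | base => intro k _; rfl
    | succ n hn ih =>
      intro k hk
      have hstep : cs (n+1) = Phi (cs n) := Function.iterate_succ_apply' Phi n b
      have hfind : Nat.find (hex n) = mI n := rfl
      have hkm : k + 1 < Nat.find (hex n) := by rw [hfind]; have := hN₁ n hn; omega
      rw [hstep, Phi_lt (cs n) (hex n) k hkm, ih k hk]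
  set P : List ℤ := (List.range (p-1)).map (cs N₁) with hP
  refine ⟨cfVal P, isExtRat_cfVal P, ?_⟩
  rw [tendsto_atTop_nhds]
  intro U hLU hUopen
  have hVopen : IsOpen (mobL P ⁻¹' U) := hUopen.preimage (continuous_mobL P)
  have hVinf : (∞ : OnePoint ℝ) ∈ mobL P ⁻¹' U := by
    rw [Set.mem_preimage, ← cfVal_eq_mobL]
    exact hLU
  obtain ⟨R, hR⟩ := nhds_infty_ball _ hVopen hVinf
  obtain ⟨Q, hQ⟩ := exists_nat_ge (R + 1)
  obtain ⟨N₂, hN₂⟩ := Filter.eventually_atTop.mp (hq.eventually_ge_atTop Q)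
  set N := max N₁ N₂ with hN
  -- all short convergents of the iterates lie in U
  have hO : ∀ n, N ≤ n → ∀ ℓ, p - 1 ≤ ℓ → ℓ ≤ mI n → V (cs n) ℓ ∈ U := by
    intro n hn ℓ hl1 hl2
    have hn1 : N₁ ≤ n := le_trans (le_max_left _ _) hn
    have hn2 : N₂ ≤ n := le_trans (le_max_right _ _) hn
    have hmp : p ≤ mI n := hN₁ n hn1
    have hpre : (List.range (p-1)).map (cs n) = P := by
      rw [hP]
      exact map_range_congr _ _ _ (fun k hk => hstab n hn1 k (by omega))
    unfold V
    rw [range_split (cs n) (p-1) ℓ (by omega), hpre, cfVal_append]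
    rcases Nat.eq_or_lt_of_le hl1 with heq | hlt
    · rw [show ℓ - (p-1) = 0 by omega]
      show mobL P (cfVal ((List.range 0).map _)) ∈ U
      rw [show (List.range 0).map (fun i => cs n (p - 1 + i)) = ([] : List ℤ) from rfl,
        cfVal_nil]
      exact hVinf
    · set t := ℓ - (p-1) - 1 with ht
      have e3 : (List.range (ℓ - (p-1))).map (fun i => cs n (p - 1 + i))
          = cs n (p-1) :: (List.range t).map (fun i => cs n (p + i)) := by
        rw [show ℓ - (p-1) = t + 1 by omega]
        exact map_range_eq_cons _ _ _ _ rfl (fun i _ => by congr 1 <;> omega)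
      rw [e3]
      have hbig : ∀ z ∈ (List.range t).map (fun i => cs n (p + i)), (2:ℝ) ≤ |(z:ℝ)| := by
        intro z hz
        rw [List.mem_map] at hz
        obtain ⟨i, hi, rfl⟩ := hz
        rw [List.mem_range] at hi
        have hltm : p + i < Nat.find (hex n) := by
          rw [show Nat.find (hex n) = mI n from rfl]; omega
        have hnb := Nat.find_min (hex n) hltm
        unfold badIdx at hnb
        push_neg at hnb
        have hvals := hnb (by omega)
        exact two_le_abs_real hvals.1 hvals.2.1 hvals.2.2
      obtain ⟨x, hx, hxabs⟩ := cfVal_head (cs n (p-1)) _ hbig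
      rw [hx]
      apply hR
      have hq2 : Q ≤ qSeq b n := hN₂ n hn2
      have hcast : (qSeq b n : ℝ) = |((cs n (p-1) : ℤ) : ℝ)| := by
        unfold qSeq
        rw [Nat.cast_natAbs]
        norm_num
        rfl
      have hQle : (Q : ℝ) ≤ |((cs n (p-1) : ℤ) : ℝ)| := by
        rw [← hcast]
        exact_mod_cast hq2
      linarith
  -- main strong induction
  have hC : ∀ ℓ : ℕ, ∀ n, N ≤ n → p - 1 ≤ ℓ → V (cs n) ℓ ∈ U := by
    intro ℓ
    induction ℓ using Nat.strong_induction_on with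
    | _ ℓ ih =>
      intro n hn hl
      rcases le_or_gt ℓ (mI n) with hle | hgt
      · exact hO n hn ℓ hl hle
      · have hfind : Nat.find (hex n) = mI n := rfl
        have hred := V_red (cs n) (hex n) ℓ (by omega)
        rw [show Phi (cs n) = cs (n+1) from (Function.iterate_succ_apply' Phi n b).symm] at hred
        set δ : ℕ := if (cs n) (Nat.find (hex n)) = 0 then 2 else 1 with hδ
        have hδ12 : δ = 2 ∨ δ = 1 := by
          rw [hδ]; split_ifs <;> simp
        have hmp : p ≤ mI n := hN₁ n (le_trans (le_max_left _ _) hn)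
        have hm1 : 1 ≤ mI n := (Nat.find_spec (hex n)).1
        rw [hred]
        exact ih (ℓ - δ) (by omega) (n+1) (by omega) (by omega)
  -- transfer from b to the iterates
  have hT : ∀ k ℓ, (∀ i, i < k → mI i + 2 * k ≤ ℓ) →
      ∃ ℓ', ℓ - 2 * k ≤ ℓ' ∧ ℓ' ≤ ℓ ∧ V b ℓ = V (cs k) ℓ' := by
    intro k
    induction k with
    | zero =>
      intro ℓ _
      exact ⟨ℓ, by omega, le_rfl, rfl⟩
    | succ k ihk =>
      intro ℓ hib
      obtain ⟨ℓ', h1, h2, h3⟩ := ihk ℓ (fun i hi => le_trans (by omega) (hib i (by omega)))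
      have hm : Nat.find (hex k) + 1 ≤ ℓ' := by
        have := hib k (by omega)
        have hfind : Nat.find (hex k) = mI k := rfl
        omega
      have hred := V_red (cs k) (hex k) ℓ' hm
      rw [show Phi (cs k) = cs (k+1) from (Function.iterate_succ_apply' Phi k b).symm] at hred
      set δ : ℕ := if (cs k) (Nat.find (hex k)) = 0 then 2 else 1 with hδ
      have hδ12 : δ = 2 ∨ δ = 1 := by
        rw [hδ]; split_ifs <;> simp
      exact ⟨ℓ' - δ, by omega, by omega, by rw [h3, hred]⟩
  set Mx := (Finset.range N).sup mI with hMx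
  refine ⟨Mx + 2*N + p + 1, fun j hj => ?_⟩
  have hcond : ∀ i, i < N → mI i + 2*N ≤ j + 1 := by
    intro i hi
    have : mI i ≤ Mx := Finset.le_sup (Finset.mem_range.mpr hi)
    omega
  obtain ⟨ℓ', h1, h2, h3⟩ := hT N (j+1) hcond
  have hconv : cfConv b j = V b (j+1) := rfl
  rw [hconv, h3]
  exact hC ℓ' N le_rfl (by omega)
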